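/- For an almost paracontact metric manifold M the following statements are equivalent: (1) M is τ-normal; (2) M is a para-CR manifold; (3) setting u(Y,X) = dτ(ψY, X) + g(hY, X), the Levi-Civita covariant derivative of ψ satisfies g((∇_X ψ)Y, Z) = −(3/2)·dΨ(X, ψY, ψZ) − (3/2)·dΨ(X, Y, Z) + u(Y,X)·τ(Z) − u(Z,X)·τ(Y) for all vector fields X, Y, Z. -/

import Mathlib

noncomputable section

/-!
An abstract model of smooth geometry: `F` plays the role of the algebra of
smooth real-valued functions on a manifold `M`, `V` plays the role of the
`C^∞(M)`-module of smooth vector fields on `M` (with its Lie bracket), and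
`D X f` represents the directional derivative of the function `f` along the
vector field `X`.
-/
structure SmoothSetting (F V : Type*) [CommRing F] [Algebra ℝ F]
    [LieRing V] [Module F V] [Module ℝ V] [IsScalarTower ℝ F V] where
  D : V → F → F
  D_add : ∀ (X : V) (f g : F), D X (f + g) = D X f + D X g
  D_mul : ∀ (X : V) (f g : F), D X (f * g) = f * D X g + g * D X f
  D_addX : ∀ (X Y : V) (f : F), D (X + Y) f = D X f + D Y f
  D_smulX : ∀ (f : F) (X : V) (k : F), D (f • X) k = f * D X k
  D_bracket : ∀ (X Y : V) (f : F), D ⁅X, Y⁆ f = D X (D Y f) - D Y (D X f)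
  bracket_smul : ∀ (f : F) (X Y : V), ⁅X, f • Y⁆ = f • ⁅X, Y⁆ + D X f • Y

/-- An almost paracontact metric manifold, modelled abstractly: a quadruple
`(ψ, ζ, τ, g)` where `ψ` is a `(1,1)`-tensor field, `ζ` a vector field, `τ` a
one-form and `g` a pseudo-Riemannian metric, satisfying `ψ² = Id - τ ⊗ ζ`,
`τ(ζ) = 1` and `g(ψX, ψY) = -g(X,Y) + τ(X)τ(Y)` (together with the standard
consequent identities `ψζ = 0`, `τ ∘ ψ = 0`), and the Levi-Civita connection
`nabla` of `g` (characterised by metricity and torsion-freeness). -/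
structure APCMS (F V : Type*) [CommRing F] [Algebra ℝ F]
    [LieRing V] [Module F V] [Module ℝ V] [IsScalarTower ℝ F V]
    extends SmoothSetting F V where
  psi : V → V
  zeta : V
  tau : V → F
  g : V → V → F
  psi_add : ∀ X Y : V, psi (X + Y) = psi X + psi Y
  psi_smul : ∀ (f : F) (X : V), psi (f • X) = f • psi X
  tau_add : ∀ X Y : V, tau (X + Y) = tau X + tau Y
  tau_smul : ∀ (f : F) (X : V), tau (f • X) = f * tau X
  g_addX : ∀ X Y Z : V, g (X + Y) Z = g X Z + g Y Z
  g_smulX : ∀ (f : F) (X Y : V), g (f • X) Y = f * g X Y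
  g_symm : ∀ X Y : V, g X Y = g Y X
  g_nondeg : ∀ X : V, (∀ Y : V, g X Y = 0) → X = 0
  psi_psi : ∀ X : V, psi (psi X) = X - tau X • zeta
  tau_zeta : tau zeta = 1
  psi_zeta : psi zeta = 0
  tau_psi : ∀ X : V, tau (psi X) = 0
  g_psi_psi : ∀ X Y : V, g (psi X) (psi Y) = - g X Y + tau X * tau Y
  nabla : V → V → V
  nabla_addX : ∀ X Y Z : V, nabla (X + Y) Z = nabla X Z + nabla Y Z
  nabla_smulX : ∀ (f : F) (X Y : V), nabla (f • X) Y = f • nabla X Y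
  nabla_addY : ∀ X Y Z : V, nabla X (Y + Z) = nabla X Y + nabla X Z
  nabla_leibniz : ∀ (X : V) (f : F) (Y : V),
    nabla X (f • Y) = D X f • Y + f • nabla X Y
  nabla_torsion_free : ∀ X Y : V, nabla X Y - nabla Y X = ⁅X, Y⁆
  nabla_metric : ∀ X Y Z : V,
    D X (g Y Z) = g (nabla X Y) Z + g Y (nabla X Z)

namespace APCMS

variable {F V : Type*} [CommRing F] [Algebra ℝ F]
  [LieRing V] [Module F V] [Module ℝ V] [IsScalarTower ℝ F V]
variable (A : APCMS F V)

/-- The fundamental form `Ψ(X,Y) = g(X, ψY)`. -/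
def Psi2 (X Y : V) : F := A.g X (A.psi Y)

/-- The exterior derivative `dτ`, via the coboundary formula
`2 dτ(X,Y) = X τ(Y) - Y τ(X) - τ([X,Y])`. -/
def dTau (X Y : V) : F :=
  ((1:ℝ)/2) • (A.D X (A.tau Y) - A.D Y (A.tau X) - A.tau ⁅X, Y⁆)

/-- The exterior derivative `dΨ`, via the coboundary formula. -/
def dPsi (X Y Z : V) : F :=
  ((1:ℝ)/3) • (A.D X (A.Psi2 Y Z) + A.D Y (A.Psi2 Z X) + A.D Z (A.Psi2 X Y)
    - A.Psi2 ⁅X, Y⁆ Z - A.Psi2 ⁅Y, Z⁆ X - A.Psi2 ⁅Z, X⁆ Y)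

/-- The Lie derivative `(L_ζ τ)(X)`. -/
def lieTau (X : V) : F := A.D A.zeta (A.tau X) - A.tau ⁅A.zeta, X⁆

/-- The Lie derivative `(L_ζ ψ)(X)`. -/
def liePsi (X : V) : V := ⁅A.zeta, A.psi X⁆ - A.psi ⁅A.zeta, X⁆

/-- The tensor field `h = (1/2) L_ζ ψ`. -/
def h (X : V) : V := ((1:ℝ)/2) • A.liePsi X

/-- The Nijenhuis torsion `[ψ,ψ](X,Y)`. -/
def nijPsi (X Y : V) : V :=
  A.psi (A.psi ⁅X, Y⁆) + ⁅A.psi X, A.psi Y⁆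
    - A.psi ⁅A.psi X, Y⁆ - A.psi ⁅X, A.psi Y⁆

/-- The tensor `K⁽¹⁾(X,Y) = [ψ,ψ](X,Y) - 2 dτ(X,Y) ζ`. -/
def K1 (X Y : V) : V := A.nijPsi X Y - (2 * A.dTau X Y) • A.zeta

/-- The tensor `K⁽²⁾(X,Y) = (L_{ψX} τ)(Y) - (L_{ψY} τ)(X)`. -/
def K2 (X Y : V) : F :=
  (A.D (A.psi X) (A.tau Y) - A.tau ⁅A.psi X, Y⁆)
    - (A.D (A.psi Y) (A.tau X) - A.tau ⁅A.psi Y, X⁆)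

/-- The covariant derivative `(∇_X ψ)(Y)`. -/
def covPsi (X Y : V) : V := A.nabla X (A.psi Y) - A.psi (A.nabla X Y)

/-- `M` is `τ`-normal: `K⁽¹⁾(X,Y) = 0` whenever `τ(X) = τ(Y) = 0`. -/
def TauNormal : Prop := ∀ X Y : V, A.tau X = 0 → A.tau Y = 0 → A.K1 X Y = 0

/-- `M` is normal: `K⁽¹⁾ = 0` identically. -/
def Normal : Prop := ∀ X Y : V, A.K1 X Y = 0

/-- `X` is a section of the `+1`-eigendistribution `V⁺` of `ψ`. -/
def Vp (X : V) : Prop := A.psi X = X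

/-- `X` is a section of the `-1`-eigendistribution `V⁻` of `ψ`. -/
def Vm (X : V) : Prop := A.psi X = -X

/-- `M` is a para-CR manifold: both eigendistributions `V⁺`, `V⁻` of `ψ` are
involutive. -/
def ParaCR : Prop :=
  (∀ X Y : V, A.Vp X → A.Vp Y → A.Vp ⁅X, Y⁆) ∧
  (∀ X Y : V, A.Vm X → A.Vm Y → A.Vm ⁅X, Y⁆)

/-- The characteristic form `τ` is a contact form: `dτ` is nondegenerate on
the kernel distribution of `τ`. -/
def IsContact : Prop :=
  ∀ X : V, A.tau X = 0 → (∀ Y : V, A.dTau X Y = 0) → X = 0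

/-- The Reeb vector field of the contact form `τ` equals the characteristic
vector field `ζ` (i.e. `τ(ζ) = 1`, which holds by definition, and
`ι_ζ dτ = 0`). -/
def ReebEqZeta : Prop := ∀ X : V, A.dTau A.zeta X = 0

/-- The Pang invariant `Π(X,Y) = (L_X L_Y τ)(ζ) = -τ([[ζ,X],Y])`; restricted
to sections of `V⁺` (resp. `V⁻`) it is the Pang invariant `Π₊` (resp. `Π₋`)
of the Legendrian foliation determined by `V⁺` (resp. `V⁻`). -/
def Pang (X Y : V) : F := - A.tau ⁅⁅A.zeta, X⁆, Y⁆

/-- The tensor field `χ(X,Y) = dτ(hX, ψY)`. -/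
def chi (X Y : V) : F := A.dTau (A.h X) (A.psi Y)

/-- `Dc` is a linear connection on `M`. -/
def IsConnection (Dc : V → V → V) : Prop :=
  (∀ X Y Z : V, Dc (X + Y) Z = Dc X Z + Dc Y Z) ∧
  (∀ (f : F) (X Y : V), Dc (f • X) Y = f • Dc X Y) ∧
  (∀ X Y Z : V, Dc X (Y + Z) = Dc X Y + Dc X Z) ∧
  (∀ (X : V) (f : F) (Y : V), Dc X (f • Y) = A.D X f • Y + f • Dc X Y)

/-- `Dc` is a parallelization: a linear connection making the whole almost
paracontact metric structure parallel: `∇̃ψ = 0`, `∇̃ζ = 0`, `∇̃τ = 0`,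
`∇̃g = 0`. -/
def IsParallelization (Dc : V → V → V) : Prop :=
  A.IsConnection Dc ∧
  (∀ X Y : V, Dc X (A.psi Y) = A.psi (Dc X Y)) ∧
  (∀ X : V, Dc X A.zeta = 0) ∧
  (∀ X Y : V, A.D X (A.tau Y) = A.tau (Dc X Y)) ∧
  (∀ X Y Z : V, A.D X (A.g Y Z) = A.g (Dc X Y) Z + A.g Y (Dc X Z))

end APCMS

namespace APCMS

variable {F V : Type*} [CommRing F] [Algebra ℝ F]
  [LieRing V] [Module F V] [Module ℝ V] [IsScalarTower ℝ F V]
variable (A : APCMS F V)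

lemma D_zero (X : V) : A.D X 0 = 0 := by
  have h := A.D_add X 0 0
  simp only [add_zero] at h
  exact right_eq_add.mp h

lemma D_one (X : V) : A.D X 1 = 0 := by
  have h := A.D_mul X 1 1
  simp only [mul_one, one_mul] at h
  exact right_eq_add.mp h

lemma D_neg (X : V) (f : F) : A.D X (-f) = -(A.D X f) := by
  have h := A.D_add X f (-f)
  simp only [add_neg_cancel, A.D_zero] at h
  exact (neg_eq_of_add_eq_zero_right h.symm).symm

lemma D_sub (X : V) (f g : F) : A.D X (f - g) = A.D X f - A.D X g := by
  rw [sub_eq_add_neg, A.D_add, A.D_neg, sub_eq_add_neg]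

lemma tau_zero' : A.tau 0 = 0 := by
  have h := A.tau_smul 0 0
  simpa using h

lemma psi_zero' : A.psi 0 = 0 := by
  have h := A.psi_smul 0 0
  simpa using h

lemma g_zeroX (Y : V) : A.g 0 Y = 0 := by
  have h := A.g_smulX 0 0 Y
  simpa using h

lemma g_zeroY (X : V) : A.g X 0 = 0 := by rw [A.g_symm, A.g_zeroX]

lemma g_addY (X Y Z : V) : A.g X (Y + Z) = A.g X Y + A.g X Z := by
  rw [A.g_symm, A.g_addX, A.g_symm Y X, A.g_symm Z X]

lemma g_smulY (f : F) (X Y : V) : A.g X (f • Y) = f * A.g X Y := by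
  rw [A.g_symm, A.g_smulX, A.g_symm Y X]

lemma tau_neg (X : V) : A.tau (-X) = -(A.tau X) := by
  rw [show -X = (-1 : F) • X by simp, A.tau_smul]; ring

lemma tau_sub (X Y : V) : A.tau (X - Y) = A.tau X - A.tau Y := by
  rw [sub_eq_add_neg, A.tau_add, A.tau_neg, sub_eq_add_neg]

lemma psi_neg (X : V) : A.psi (-X) = -(A.psi X) := by
  rw [show -X = (-1 : F) • X by simp, A.psi_smul]; simp

lemma psi_sub (X Y : V) : A.psi (X - Y) = A.psi X - A.psi Y := by
  rw [sub_eq_add_neg, A.psi_add, A.psi_neg, sub_eq_add_neg]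

lemma g_negX (X Y : V) : A.g (-X) Y = -(A.g X Y) := by
  rw [show -X = (-1 : F) • X by simp, A.g_smulX]; ring

lemma g_negY (X Y : V) : A.g X (-Y) = -(A.g X Y) := by
  rw [A.g_symm, A.g_negX, A.g_symm Y X]

lemma g_subX (X Y Z : V) : A.g (X - Y) Z = A.g X Z - A.g Y Z := by
  rw [sub_eq_add_neg, A.g_addX, A.g_negX, sub_eq_add_neg]

lemma g_subY (X Y Z : V) : A.g X (Y - Z) = A.g X Y - A.g X Z := by
  rw [sub_eq_add_neg, A.g_addY, A.g_negY, sub_eq_add_neg]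

end APCMS
namespace APCMS

variable {F V : Type*} [CommRing F] [Algebra ℝ F]
  [LieRing V] [Module F V] [Module ℝ V] [IsScalarTower ℝ F V]
variable (A : APCMS F V)

lemma natCast_isUnit (n : ℕ) (hn : (n : ℝ) ≠ 0) : IsUnit (n : F) := by
  have h : algebraMap ℝ F ((n : ℝ)⁻¹) * (n : F) = 1 := by
    rw [show ((n : ℕ) : F) = algebraMap ℝ F ((n : ℕ) : ℝ) by rw [map_natCast],
      ← map_mul, inv_mul_cancel₀ hn, map_one]
  exact IsUnit.of_mul_eq_one _ ((mul_comm _ _).trans h)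

lemma cancel2 {x y : F} (h : 2 * x = 2 * y) : x = y := by
  have h2 : IsUnit ((2 : ℕ) : F) := natCast_isUnit 2 (by norm_num)
  rw [Nat.cast_ofNat] at h2
  exact h2.mul_left_cancel h

lemma cancel3 {x y : F} (h : 3 * x = 3 * y) : x = y := by
  have h2 : IsUnit ((3 : ℕ) : F) := natCast_isUnit 3 (by norm_num)
  rw [Nat.cast_ofNat] at h2
  exact h2.mul_left_cancel h

lemma cancel6 {x y : F} (h : 6 * x = 6 * y) : x = y := by
  have h2 : IsUnit ((6 : ℕ) : F) := natCast_isUnit 6 (by norm_num)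
  rw [Nat.cast_ofNat] at h2
  exact h2.mul_left_cancel h

lemma rcancelV (r : ℝ) (hr : r ≠ 0) {v w : V} (h : r • v = r • w) : v = w := by
  have := congrArg (fun t => r⁻¹ • t) h
  simpa [smul_smul, inv_mul_cancel₀ hr] using this

/-- turn a real scalar on `F` into multiplication -/
lemma rsmulF (n : ℕ) (x : F) : (n : ℝ) • x = (n : F) * x := by
  rw [Nat.cast_smul_eq_nsmul, nsmul_eq_mul]

lemma half_smul_F (x : F) : 2 * (((1:ℝ)/2) • x) = x := by
  have : (2 : F) * (((1:ℝ)/2) • x) = ((2:ℕ) : F) * (((1:ℝ)/2) • x) := by norm_num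
  rw [this, ← rsmulF, smul_smul]
  norm_num

lemma third_smul_F (x : F) : 3 * (((1:ℝ)/3) • x) = x := by
  have : (3 : F) * (((1:ℝ)/3) • x) = ((3:ℕ) : F) * (((1:ℝ)/3) • x) := by norm_num
  rw [this, ← rsmulF, smul_smul]
  norm_num

lemma six_threehalf_smul_F (x : F) : 6 * (((3:ℝ)/2) • x) = 9 * x := by
  have h1 : (6 : F) * (((3:ℝ)/2) • x) = ((6:ℕ) : F) * (((3:ℝ)/2) • x) := by norm_num
  have h2 : (9 : F) * x = ((9:ℕ) : F) * x := by norm_num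
  rw [h1, h2, ← rsmulF, ← rsmulF, smul_smul]
  norm_num

lemma g_zeta_r (X : V) : A.g X A.zeta = A.tau X := by
  have h := A.g_psi_psi X A.zeta
  rw [A.psi_zeta, A.g_zeroY, A.tau_zeta, mul_one] at h
  linear_combination h

lemma g_zeta_l (X : V) : A.g A.zeta X = A.tau X := by rw [A.g_symm, A.g_zeta_r]

lemma g_psi_zeta (X : V) : A.g (A.psi X) A.zeta = 0 := by
  rw [A.g_zeta_r, A.tau_psi]

lemma g_psiX (X Y : V) : A.g (A.psi X) Y = -(A.g X (A.psi Y)) := by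
  have h := A.g_psi_psi X (A.psi Y)
  rw [A.tau_psi, mul_zero, add_zero, A.psi_psi, A.g_subY, A.g_smulY, A.g_zeta_r,
    A.tau_psi, mul_zero, sub_zero] at h
  exact h

lemma koszulF (X Y Z : V) : 2 * A.g (A.nabla X Y) Z =
    A.D X (A.g Y Z) + A.D Y (A.g Z X) - A.D Z (A.g X Y)
      + A.g ⁅X, Y⁆ Z - A.g ⁅Y, Z⁆ X + A.g ⁅Z, X⁆ Y := by
  rw [A.nabla_metric X Y Z, A.nabla_metric Y Z X, A.nabla_metric Z X Y,
    ← A.nabla_torsion_free X Y, ← A.nabla_torsion_free Y Z, ← A.nabla_torsion_free Z X,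
    A.g_subX, A.g_subX, A.g_subX,
    A.g_symm Y (A.nabla X Z), A.g_symm Z (A.nabla Y X), A.g_symm X (A.nabla Z Y)]
  ring

lemma dTau2 (X Y : V) : 2 * A.dTau X Y =
    A.D X (A.tau Y) - A.D Y (A.tau X) - A.tau ⁅X, Y⁆ := by
  rw [dTau, half_smul_F]

lemma dPsi3 (X Y Z : V) : 3 * A.dPsi X Y Z =
    A.D X (A.g Y (A.psi Z)) + A.D Y (A.g Z (A.psi X)) + A.D Z (A.g X (A.psi Y))
      - A.g ⁅X, Y⁆ (A.psi Z) - A.g ⁅Y, Z⁆ (A.psi X) - A.g ⁅Z, X⁆ (A.psi Y) := by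
  rw [dPsi, third_smul_F]
  rfl

lemma gh2 (Y X : V) : 2 * A.g (A.h Y) X =
    A.g ⁅A.zeta, A.psi Y⁆ X + A.g ⁅A.zeta, Y⁆ (A.psi X) := by
  rw [h, liePsi]
  rw [show (((1:ℝ)/2) • (⁅A.zeta, A.psi Y⁆ - A.psi ⁅A.zeta, Y⁆) : V)
      = (algebraMap ℝ F ((1:ℝ)/2)) • (⁅A.zeta, A.psi Y⁆ - A.psi ⁅A.zeta, Y⁆) from
      (algebraMap_smul F _ _).symm]
  rw [A.g_smulX, ← mul_assoc]
  rw [show (2 : F) * algebraMap ℝ F ((1:ℝ)/2) = 1 from by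
    rw [show (2:F) = algebraMap ℝ F 2 from by norm_num [map_ofNat], ← map_mul]
    norm_num]
  rw [one_mul, A.g_subX, A.g_psiX]
  ring

end APCMS
namespace APCMS

variable {F V : Type*} [CommRing F] [Algebra ℝ F]
  [LieRing V] [Module F V] [Module ℝ V] [IsScalarTower ℝ F V]
variable (A : APCMS F V)

/-- The correction tensor: `N(Y,Z) = ½ψ(K¹(Y,Z)) + ½K²(Y,Z)·ζ − τ(Z)·hY + τ(Y)·hZ`. -/
def NT (Y Z : V) : V :=
  ((1:ℝ)/2) • A.psi (A.K1 Y Z) + ((1:ℝ)/2) • (A.K2 Y Z • A.zeta)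
    - A.tau Z • A.h Y + A.tau Y • A.h Z

lemma g_rsmulY (r : ℝ) (X Y : V) : A.g X (r • Y) = r • A.g X Y := by
  rw [← algebraMap_smul F r Y, A.g_smulY, ← Algebra.smul_def]

lemma six_half_smul_F (x : F) : 6 * (((1:ℝ)/2) • x) = 3 * x := by
  have h1 : (6 : F) * (((1:ℝ)/2) • x) = ((6:ℕ) : F) * (((1:ℝ)/2) • x) := by norm_num
  have h2 : (3 : F) * x = ((3:ℕ) : F) * x := by norm_num
  rw [h1, h2, ← rsmulF, ← rsmulF, smul_smul]
  norm_num

lemma gpsiK1 (X Y Z : V) : A.g X (A.psi (A.K1 Y Z)) =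
    A.g X (A.psi ⁅Y, Z⁆) + A.g X (A.psi ⁅A.psi Y, A.psi Z⁆)
      - A.g X ⁅A.psi Y, Z⁆ - A.g X ⁅Y, A.psi Z⁆
      + A.tau ⁅A.psi Y, Z⁆ * A.tau X + A.tau ⁅Y, A.psi Z⁆ * A.tau X := by
  rw [K1, nijPsi]
  simp only [A.psi_sub, A.psi_add, A.psi_smul, A.psi_zeta, smul_zero, A.psi_psi,
    A.tau_psi, zero_smul, sub_zero, A.g_subY, A.g_addY, A.g_smulY, A.g_zeta_r,
    A.g_zeroY, A.tau_zeta]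
  ring

lemma gN6 (X Y Z : V) : 6 * A.g X (A.NT Y Z) =
    3 * A.g X (A.psi ⁅Y, Z⁆) + 3 * A.g X (A.psi ⁅A.psi Y, A.psi Z⁆)
      - 3 * A.g X ⁅A.psi Y, Z⁆ - 3 * A.g X ⁅Y, A.psi Z⁆
      + 3 * A.tau ⁅A.psi Y, Z⁆ * A.tau X + 3 * A.tau ⁅Y, A.psi Z⁆ * A.tau X
      + 3 * (A.D (A.psi Y) (A.tau Z) - A.tau ⁅A.psi Y, Z⁆
            - A.D (A.psi Z) (A.tau Y) + A.tau ⁅A.psi Z, Y⁆) * A.tau X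
      - 3 * A.tau Z * (A.g ⁅A.zeta, A.psi Y⁆ X + A.g ⁅A.zeta, Y⁆ (A.psi X))
      + 3 * A.tau Y * (A.g ⁅A.zeta, A.psi Z⁆ X + A.g ⁅A.zeta, Z⁆ (A.psi X)) := by
  rw [NT]
  rw [A.g_addY, A.g_subY, A.g_addY, A.g_rsmulY, A.g_rsmulY, A.g_smulY, A.g_smulY,
    A.g_smulY, A.g_zeta_r]
  simp only [mul_add, mul_sub]
  rw [six_half_smul_F, six_half_smul_F, A.gpsiK1, K2]
  have hY : 6 * (A.tau Z * A.g X (A.h Y)) = 3 * A.tau Z * (2 * A.g (A.h Y) X) := by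
    rw [A.g_symm X]; ring
  have hZ : 6 * (A.tau Y * A.g X (A.h Z)) = 3 * A.tau Y * (2 * A.g (A.h Z) X) := by
    rw [A.g_symm X]; ring
  rw [hY, hZ, A.gh2, A.gh2]
  ring

end APCMS
namespace APCMS

variable {F V : Type*} [CommRing F] [Algebra ℝ F]
  [LieRing V] [Module F V] [Module ℝ V] [IsScalarTower ℝ F V]
variable (A : APCMS F V)

lemma master (X Y Z : V) :
    A.g (A.covPsi X Y) Z =
      -(((3:ℝ)/2) • A.dPsi X (A.psi Y) (A.psi Z))
        - ((3:ℝ)/2) • A.dPsi X Y Z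
        + (A.dTau (A.psi Y) X + A.g (A.h Y) X) * A.tau Z
        - (A.dTau (A.psi Z) X + A.g (A.h Z) X) * A.tau Y
        + A.g X (A.NT Y Z) := by
  apply cancel6 (F := F)
  rw [covPsi, A.g_subX, A.g_psiX]
  simp only [mul_add, mul_sub, mul_neg, sub_neg_eq_add, add_mul]
  rw [six_threehalf_smul_F, six_threehalf_smul_F, A.gN6]
  have k1 := A.koszulF X (A.psi Y) Z
  have k2 := A.koszulF X Y (A.psi Z)
  have d1 := A.dPsi3 X (A.psi Y) (A.psi Z)
  have d2 := A.dPsi3 X Y Z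
  have t1 := A.dTau2 (A.psi Y) X
  have t2 := A.dTau2 (A.psi Z) X
  have hh1 := A.gh2 Y X
  have hh2 := A.gh2 Z X
  simp only [A.psi_psi, A.psi_sub, A.psi_smul, A.psi_zeta, smul_zero, sub_zero,
    A.tau_psi, A.D_zero, A.g_psiX, A.g_subY, A.g_smulY, A.D_mul,
    A.g_zeta_r, A.tau_zeta, mul_zero, zero_mul, zero_sub, mul_one,
    A.D_neg, A.g_negY, A.tau_neg, neg_neg, A.g_zeroY, A.D_sub] at k1 k2 d1 d2 t1 t2 hh1 hh2 ⊢
  have sk1 : A.tau ⁅A.psi Y, X⁆ = -A.tau ⁅X, A.psi Y⁆ := by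
    rw [← lie_skew, A.tau_neg]
  have sk2 : A.tau ⁅A.psi Z, X⁆ = -A.tau ⁅X, A.psi Z⁆ := by
    rw [← lie_skew, A.tau_neg]
  have sk3 : A.tau ⁅A.psi Z, Y⁆ = -A.tau ⁅Y, A.psi Z⁆ := by
    rw [← lie_skew, A.tau_neg]
  have sy1 : A.g ⁅A.psi Y, Z⁆ X = A.g X ⁅A.psi Y, Z⁆ := A.g_symm _ _
  have sy2 : A.g ⁅Y, A.psi Z⁆ X = A.g X ⁅Y, A.psi Z⁆ := A.g_symm _ _
  have m1 : A.g ⁅A.psi Y, A.psi Z⁆ (A.psi X) = -A.g X (A.psi ⁅A.psi Y, A.psi Z⁆) := by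
    rw [A.g_symm, A.g_psiX]
  have m2 : A.g ⁅Y, Z⁆ (A.psi X) = -A.g X (A.psi ⁅Y, Z⁆) := by
    rw [A.g_symm, A.g_psiX]
  linear_combination (norm := ring_nf) 3*k1 + 3*k2 + 3*d1 + 3*d2
    - 3*(A.tau Z)*t1 + 3*(A.tau Y)*t2 - 3*(A.tau Z)*hh1 + 3*(A.tau Y)*hh2
    + 3*(A.tau Z)*sk1 - 3*(A.tau X)*sk3
    - 3*sy1 - 3*sy2 - 3*m1 - 3*m2

end APCMS
namespace APCMS

variable {F V : Type*} [CommRing F] [Algebra ℝ F]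
  [LieRing V] [Module F V] [Module ℝ V] [IsScalarTower ℝ F V]
variable (A : APCMS F V)

lemma D_zeroX (f : F) : A.D 0 f = 0 := by
  have h := A.D_smulX 0 0 f
  simpa using h

lemma smul_lie' (f : F) (X Y : V) : ⁅f • X, Y⁆ = f • ⁅X, Y⁆ - A.D Y f • X := by
  rw [← lie_skew, A.bracket_smul, show ⁅Y, X⁆ = -⁅X, Y⁆ from (lie_skew _ _).symm]
  module

lemma h_zeta : A.h A.zeta = 0 := by
  simp [h, liePsi, A.psi_zeta, A.psi_zero']

lemma h_add (Y Y' : V) : A.h (Y + Y') = A.h Y + A.h Y' := by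
  simp only [h, liePsi, A.psi_add, lie_add, A.psi_add]
  module

lemma h_smul (f : F) (Y : V) : A.h (f • Y) = f • A.h Y := by
  simp only [h, liePsi, A.psi_smul, A.bracket_smul, A.psi_add, A.psi_smul]
  rw [← algebraMap_smul F ((1:ℝ)/2) (⁅A.zeta, A.psi Y⁆ - A.psi ⁅A.zeta, Y⁆),
    ← algebraMap_smul F ((1:ℝ)/2)]
  module

lemma dTau_skew (X Y : V) : A.dTau X Y = -A.dTau Y X := by
  simp only [dTau, show ⁅Y, X⁆ = -⁅X, Y⁆ from (lie_skew _ _).symm, A.tau_neg]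
  rw [← algebraMap_smul F ((1:ℝ)/2), ← algebraMap_smul F ((1:ℝ)/2)]
  module

lemma dTau_addL (X X' Y : V) : A.dTau (X + X') Y = A.dTau X Y + A.dTau X' Y := by
  simp only [dTau, A.D_addX, A.tau_add, add_lie, A.D_add]
  rw [← algebraMap_smul F ((1:ℝ)/2), ← algebraMap_smul F ((1:ℝ)/2),
    ← algebraMap_smul F ((1:ℝ)/2)]
  module

lemma dTau_smulL (f : F) (X Y : V) : A.dTau (f • X) Y = f * A.dTau X Y := by
  simp only [dTau, A.D_smulX, A.smul_lie', A.tau_sub, A.tau_smul, A.D_mul, A.tau_add]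
  rw [← algebraMap_smul F ((1:ℝ)/2), ← algebraMap_smul F ((1:ℝ)/2)]
  simp only [smul_eq_mul]
  ring

lemma K1_skew (Y Z : V) : A.K1 Y Z = -A.K1 Z Y := by
  simp only [K1, nijPsi, show ⁅Z, Y⁆ = -⁅Y, Z⁆ from (lie_skew _ _).symm,
    show ⁅A.psi Z, A.psi Y⁆ = -⁅A.psi Y, A.psi Z⁆ from (lie_skew _ _).symm,
    show ⁅A.psi Z, Y⁆ = -⁅Y, A.psi Z⁆ from (lie_skew _ _).symm,
    show ⁅Z, A.psi Y⁆ = -⁅A.psi Y, Z⁆ from (lie_skew _ _).symm,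
    A.psi_neg, A.dTau_skew Z Y, neg_neg]
  module

lemma K1_addY (Y Y' Z : V) : A.K1 (Y + Y') Z = A.K1 Y Z + A.K1 Y' Z := by
  simp only [K1, nijPsi, A.psi_add, add_lie, lie_add, A.dTau_addL, mul_add, add_smul]
  module

lemma K1_smulY (f : F) (Y Z : V) : A.K1 (f • Y) Z = f • A.K1 Y Z := by
  simp only [K1, nijPsi, A.psi_smul, A.smul_lie', A.psi_sub, A.psi_smul,
    A.dTau_smulL, mul_left_comm f]
  rw [show (2 : F) * (f * A.dTau Y Z) = f * (2 * A.dTau Y Z) from by ring]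
  rw [mul_smul]
  module

lemma K2_addY (Y Y' Z : V) : A.K2 (Y + Y') Z = A.K2 Y Z + A.K2 Y' Z := by
  simp only [K2, A.psi_add, A.D_addX, add_lie, lie_add, A.tau_add, A.D_add]
  ring

lemma K2_smulY (f : F) (Y Z : V) : A.K2 (f • Y) Z = f * A.K2 Y Z := by
  simp only [K2, A.psi_smul, A.D_smulX, A.smul_lie', A.bracket_smul, A.tau_sub,
    A.tau_add, A.tau_smul, A.tau_psi, A.D_mul, mul_zero, add_zero]
  ring

lemma K2_skew (Y Z : V) : A.K2 Y Z = -A.K2 Z Y := by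
  simp only [K2]; ring

lemma NT_skew (Y Z : V) : A.NT Y Z = -A.NT Z Y := by
  rw [NT, NT, A.K1_skew, A.K2_skew, A.psi_neg]
  rw [← algebraMap_smul F ((1:ℝ)/2), ← algebraMap_smul F ((1:ℝ)/2),
    ← algebraMap_smul F ((1:ℝ)/2), ← algebraMap_smul F ((1:ℝ)/2)]
  module

lemma NT_addY (Y Y' Z : V) : A.NT (Y + Y') Z = A.NT Y Z + A.NT Y' Z := by
  rw [NT, NT, NT, A.K1_addY, A.K2_addY, A.psi_add, A.h_add, A.tau_add]
  rw [← algebraMap_smul F ((1:ℝ)/2), ← algebraMap_smul F ((1:ℝ)/2),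
    ← algebraMap_smul F ((1:ℝ)/2), ← algebraMap_smul F ((1:ℝ)/2),
    ← algebraMap_smul F ((1:ℝ)/2), ← algebraMap_smul F ((1:ℝ)/2)]
  module

lemma NT_smulY (f : F) (Y Z : V) : A.NT (f • Y) Z = f • A.NT Y Z := by
  rw [NT, NT, A.K1_smulY, A.K2_smulY, A.psi_smul, A.h_smul, A.tau_smul]
  rw [← algebraMap_smul F ((1:ℝ)/2), ← algebraMap_smul F ((1:ℝ)/2),
    ← algebraMap_smul F ((1:ℝ)/2), ← algebraMap_smul F ((1:ℝ)/2)]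
  rw [mul_smul]
  module

lemma NT_zeta_left (Z : V) : A.NT A.zeta Z = 0 := by
  rw [NT]
  simp only [K1, nijPsi, K2, A.psi_zeta, zero_lie, lie_zero, A.psi_zero',
    A.D_zeroX, A.tau_zero', A.tau_zeta, A.D_one, A.psi_sub, A.psi_add, A.psi_smul,
    A.psi_psi, A.tau_psi, zero_smul, smul_zero, sub_zero, zero_sub, zero_add, add_zero,
    lie_self, h, liePsi, A.tau_zeta,
    show ⁅A.psi Z, A.zeta⁆ = -⁅A.zeta, A.psi Z⁆ from (lie_skew _ _).symm, A.tau_neg]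
  rw [← algebraMap_smul F ((1:ℝ)/2), ← algebraMap_smul F ((1:ℝ)/2),
    ← algebraMap_smul F ((1:ℝ)/2)]
  module

lemma NT_zeta_right (Y : V) : A.NT Y A.zeta = 0 := by
  rw [A.NT_skew, A.NT_zeta_left, neg_zero]

end APCMS
namespace APCMS

variable {F V : Type*} [CommRing F] [Algebra ℝ F]
  [LieRing V] [Module F V] [Module ℝ V] [IsScalarTower ℝ F V]
variable (A : APCMS F V)

lemma Vp_tau {a : V} (ha : A.Vp a) : A.tau a = 0 := by
  have h := A.tau_psi a
  rwa [ha] at h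

lemma Vm_tau {a : V} (ha : A.Vm a) : A.tau a = 0 := by
  have h := A.tau_psi a
  rw [ha, A.tau_neg, neg_eq_zero] at h
  exact h

lemma dTau_ker {X Y : V} (hX : A.tau X = 0) (hY : A.tau Y = 0) :
    (2:F) * A.dTau X Y = -A.tau ⁅X, Y⁆ := by
  rw [A.dTau2, hX, hY, A.D_zero, A.D_zero]
  ring

lemma K1_pp {a b : V} (ha : A.Vp a) (hb : A.Vp b) :
    A.K1 a b = (⁅a, b⁆ - A.psi ⁅a, b⁆) + (⁅a, b⁆ - A.psi ⁅a, b⁆) := by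
  have ta := A.Vp_tau ha
  have tb := A.Vp_tau hb
  rw [K1, nijPsi, ha, hb, A.dTau_ker ta tb, A.psi_psi]
  module

lemma K1_mm {a b : V} (ha : A.Vm a) (hb : A.Vm b) :
    A.K1 a b = (⁅a, b⁆ + A.psi ⁅a, b⁆) + (⁅a, b⁆ + A.psi ⁅a, b⁆) := by
  have ta := A.Vm_tau ha
  have tb := A.Vm_tau hb
  rw [K1, nijPsi, ha, hb, A.dTau_ker ta tb, A.psi_psi]
  simp only [neg_lie, lie_neg, neg_neg, A.psi_neg]
  module

lemma K1_pm {a b : V} (ha : A.Vp a) (hb : A.Vm b) : A.K1 a b = 0 := by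
  have ta := A.Vp_tau ha
  have tb := A.Vm_tau hb
  rw [K1, nijPsi, ha, hb, A.dTau_ker ta tb, A.psi_psi]
  simp only [neg_lie, lie_neg, A.psi_neg]
  module

lemma K1_addZ (Y Z Z' : V) : A.K1 Y (Z + Z') = A.K1 Y Z + A.K1 Y Z' := by
  rw [A.K1_skew, A.K1_addY, A.K1_skew Z Y, A.K1_skew Z' Y]
  module

lemma double_eq_zero {w : V} (h : w + w = 0) : w = 0 := by
  have h2 : (2:ℝ) • w = (2:ℝ) • (0:V) := by
    rw [two_smul, smul_zero]; exact h
  exact rcancelV 2 (by norm_num) h2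

lemma paraCR_of_tauNormal (hN : A.TauNormal) : A.ParaCR := by
  constructor
  · intro a b ha hb
    have h0 := hN a b (A.Vp_tau ha) (A.Vp_tau hb)
    rw [A.K1_pp ha hb] at h0
    have h1 := double_eq_zero h0
    exact (sub_eq_zero.mp h1).symm
  · intro a b ha hb
    have h0 := hN a b (A.Vm_tau ha) (A.Vm_tau hb)
    rw [A.K1_mm ha hb] at h0
    have h1 := double_eq_zero h0
    exact eq_neg_of_add_eq_zero_right h1

lemma K1_mp {a b : V} (ha : A.Vm a) (hb : A.Vp b) : A.K1 a b = 0 := by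
  rw [A.K1_skew, A.K1_pm hb ha, neg_zero]

lemma tauNormal_of_paraCR (hP : A.ParaCR) : A.TauNormal := by
  intro Y Z hY hZ
  set a := ((1:ℝ)/2) • (Y + A.psi Y) with hadef
  set a' := ((1:ℝ)/2) • (Y - A.psi Y) with ha'def
  set b := ((1:ℝ)/2) • (Z + A.psi Z) with hbdef
  set b' := ((1:ℝ)/2) • (Z - A.psi Z) with hb'def
  have hpa : A.Vp a := by
    rw [Vp, hadef, ← algebraMap_smul F ((1:ℝ)/2), A.psi_smul, A.psi_add, A.psi_psi, hY]
    module
  have hma : A.Vm a' := by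
    rw [Vm, ha'def, ← algebraMap_smul F ((1:ℝ)/2), A.psi_smul, A.psi_sub, A.psi_psi, hY]
    module
  have hpb : A.Vp b := by
    rw [Vp, hbdef, ← algebraMap_smul F ((1:ℝ)/2), A.psi_smul, A.psi_add, A.psi_psi, hZ]
    module
  have hmb : A.Vm b' := by
    rw [Vm, hb'def, ← algebraMap_smul F ((1:ℝ)/2), A.psi_smul, A.psi_sub, A.psi_psi, hZ]
    module
  have hYs : Y = a + a' := by rw [hadef, ha'def]; module
  have hZs : Z = b + b' := by rw [hbdef, hb'def]; module
  rw [hYs, hZs, A.K1_addY, A.K1_addZ, A.K1_addZ]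
  have hab : A.K1 a b = 0 := by
    rw [A.K1_pp hpa hpb, hP.1 a b hpa hpb]
    module
  have ha'b' : A.K1 a' b' = 0 := by
    rw [A.K1_mm hma hmb, hP.2 a' b' hma hmb]
    module
  rw [hab, ha'b', A.K1_pm hpa hmb, A.K1_mp hma hpb]
  module

end APCMS

namespace APCMS

variable {F V : Type*} [CommRing F] [Algebra ℝ F]
  [LieRing V] [Module F V] [Module ℝ V] [IsScalarTower ℝ F V]
variable (A : APCMS F V)

lemma two_half_smul_V {W : Type*} [AddCommGroup W] [Module ℝ W] (x : W) :
    (2:ℝ) • (((1:ℝ)/2) • x) = x := by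
  rw [smul_smul]
  norm_num

lemma K2_ker (hN : A.TauNormal) {Y Z : V} (hY : A.tau Y = 0) (hZ : A.tau Z = 0) :
    A.K2 Y Z = 0 := by
  have h1 : A.K1 (A.psi Y) Z = 0 := hN _ _ (A.tau_psi Y) hZ
  have h2 := congrArg A.tau h1
  simp only [K1, nijPsi, A.tau_sub, A.tau_add, A.tau_smul, A.tau_zeta, mul_one,
    A.tau_psi, A.psi_psi, hY, zero_smul, sub_zero, A.tau_zero'] at h2
  rw [A.dTau_ker (A.tau_psi Y) hZ] at h2
  -- h2 : tau ⁅Y, psi Z⁆ - -(tau ⁅psi Y, Z⁆) = 0  (roughly)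
  rw [K2, hY, hZ, A.D_zero, A.D_zero,
    show ⁅A.psi Z, Y⁆ = -⁅Y, A.psi Z⁆ from (lie_skew _ _).symm, A.tau_neg]
  linear_combination -h2

lemma NT_ker (hN : A.TauNormal) {Y Z : V} (hY : A.tau Y = 0) (hZ : A.tau Z = 0) :
    A.NT Y Z = 0 := by
  rw [NT, hN Y Z hY hZ, A.K2_ker hN hY hZ, A.psi_zero', hY, hZ]
  simp

lemma NT_all (hN : A.TauNormal) (Y Z : V) : A.NT Y Z = 0 := by
  have hY0 : A.tau (Y - A.tau Y • A.zeta) = 0 := by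
    rw [A.tau_sub, A.tau_smul, A.tau_zeta, mul_one, sub_self]
  have hZ0 : A.tau (Z - A.tau Z • A.zeta) = 0 := by
    rw [A.tau_sub, A.tau_smul, A.tau_zeta, mul_one, sub_self]
  have eY : Y = (Y - A.tau Y • A.zeta) + A.tau Y • A.zeta := by abel
  have eZ : Z = (Z - A.tau Z • A.zeta) + A.tau Z • A.zeta := by abel
  calc A.NT Y Z = A.NT ((Y - A.tau Y • A.zeta) + A.tau Y • A.zeta) Z := by rw [← eY]
    _ = A.NT (Y - A.tau Y • A.zeta) Z := by
        rw [A.NT_addY, A.NT_smulY, A.NT_zeta_left, smul_zero, add_zero]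
    _ = -A.NT Z (Y - A.tau Y • A.zeta) := A.NT_skew _ _
    _ = -A.NT ((Z - A.tau Z • A.zeta) + A.tau Z • A.zeta) (Y - A.tau Y • A.zeta) := by
        rw [← eZ]
    _ = -A.NT (Z - A.tau Z • A.zeta) (Y - A.tau Y • A.zeta) := by
        rw [A.NT_addY, A.NT_smulY, A.NT_zeta_left, smul_zero, add_zero]
    _ = 0 := by rw [A.NT_ker hN hZ0 hY0, neg_zero]

lemma NT_pp {a b : V} (ha : A.Vp a) (hb : A.Vp b) :
    A.NT a b = A.psi ⁅a, b⁆ - ⁅a, b⁆ := by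
  have ta := A.Vp_tau ha
  have tb := A.Vp_tau hb
  have hK2 : A.K2 a b = -A.tau ⁅a, b⁆ - A.tau ⁅a, b⁆ := by
    rw [K2, ha, hb, ta, tb, A.D_zero, A.D_zero,
      show ⁅b, a⁆ = -⁅a, b⁆ from (lie_skew _ _).symm, A.tau_neg]
    ring
  apply rcancelV (2:ℝ) (by norm_num)
  rw [NT, ta, tb, zero_smul, zero_smul, sub_zero, add_zero, smul_add,
    two_half_smul_V, two_half_smul_V, A.K1_pp ha hb, hK2, A.psi_add, A.psi_sub,
    A.psi_psi, two_smul]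
  module

lemma NT_mm {a b : V} (ha : A.Vm a) (hb : A.Vm b) :
    A.NT a b = A.psi ⁅a, b⁆ + ⁅a, b⁆ := by
  have ta := A.Vm_tau ha
  have tb := A.Vm_tau hb
  have hK2 : A.K2 a b = A.tau ⁅a, b⁆ + A.tau ⁅a, b⁆ := by
    rw [K2, ha, hb, ta, tb, A.D_zero, A.D_zero, neg_lie, neg_lie, A.tau_neg, A.tau_neg,
      show ⁅b, a⁆ = -⁅a, b⁆ from (lie_skew _ _).symm, A.tau_neg]
    ring
  apply rcancelV (2:ℝ) (by norm_num)
  rw [NT, ta, tb, zero_smul, zero_smul, sub_zero, add_zero, smul_add,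
    two_half_smul_V, two_half_smul_V, A.K1_mm ha hb, hK2, A.psi_add, A.psi_add,
    A.psi_psi, two_smul]
  module

end APCMS


/-- For an almost paracontact metric manifold `M` the following
are equivalent: (1) `M` is `τ`-normal; (2) `M` is a para-CR manifold; (3) with
`u(Y,X) = dτ(ψY, X) + g(hY, X)`, the Levi-Civita covariant derivative of `ψ`
satisfies `g((∇_X ψ)Y, Z) = -(3/2)dΨ(X, ψY, ψZ) - (3/2)dΨ(X,Y,Z)
+ u(Y,X)τ(Z) - u(Z,X)τ(Y)` for all vector fields `X, Y, Z`. -/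
theorem tau_normal_iff_paraCR_iff_covariant_formula
    {F V : Type*} [CommRing F] [Algebra ℝ F]
    [LieRing V] [Module F V] [Module ℝ V] [IsScalarTower ℝ F V]
    (A : APCMS F V) :
    (A.TauNormal ↔ A.ParaCR) ∧
    (A.TauNormal ↔ ∀ X Y Z : V,
      A.g (A.covPsi X Y) Z =
        -(((3:ℝ)/2) • A.dPsi X (A.psi Y) (A.psi Z))
          - ((3:ℝ)/2) • A.dPsi X Y Z
          + (A.dTau (A.psi Y) X + A.g (A.h Y) X) * A.tau Z
          - (A.dTau (A.psi Z) X + A.g (A.h Z) X) * A.tau Y) := by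
  
  constructor
  · exact ⟨A.paraCR_of_tauNormal, A.tauNormal_of_paraCR⟩
  constructor
  · intro hN X Y Z
    rw [A.master X Y Z, A.NT_all hN, A.g_zeroY, add_zero]
  · intro hf
    apply A.tauNormal_of_paraCR
    have hNT : ∀ Y Z : V, A.NT Y Z = 0 := by
      intro Y Z
      apply A.g_nondeg
      intro W
      rw [A.g_symm]
      have h1 := A.master W Y Z
      have h2 := hf W Y Z
      linear_combination h2 - h1
    constructor
    · intro a b ha hb
      have h := hNT a b
      rw [A.NT_pp ha hb] at h
      exact sub_eq_zero.mp h
    · intro a b ha hb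
      have h := hNT a b
      rw [A.NT_mm ha hb] at h
      exact eq_neg_of_add_eq_zero_left h
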